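/- Let R be a right Kasch ring and J a superfluous right ideal satisfying rl(J) = J. Then l(J) has nonzero intersection with every nonzero left ideal X satisfying lr(X) = X. -/

import Mathlib

open Pointwise

universe u

/-- The left annihilator of a subset `X` of a ring. -/
def lAnn {R : Type*} [Ring R] (X : Set R) : Set R := {a | ∀ x ∈ X, a * x = 0}

/-- The right annihilator of a subset `X` of a ring. -/
def rAnn {R : Type*} [Ring R] (X : Set R) : Set R := {a | ∀ x ∈ X, x * a = 0}

/-- A subset of a ring is a right ideal. -/
def IsRightIdeal {R : Type*} [Ring R] (I : Set R) : Prop :=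
  (0 : R) ∈ I ∧ (∀ a b : R, a ∈ I → b ∈ I → a + b ∈ I) ∧ ∀ a ∈ I, ∀ r : R, a * r ∈ I

/-- A subset of a ring is a left ideal. -/
def IsLeftIdeal {R : Type*} [Ring R] (I : Set R) : Prop :=
  (0 : R) ∈ I ∧ (∀ a b : R, a ∈ I → b ∈ I → a + b ∈ I) ∧ ∀ a ∈ I, ∀ r : R, r * a ∈ I

/-- `R` is right Kasch: every simple right `R`-module is isomorphic to a right
ideal of `R`. -/
def RightKasch (R : Type u) [Ring R] : Prop :=
  ∀ (M : Type u) [AddCommGroup M] [Module Rᵐᵒᵖ M], IsSimpleModule Rᵐᵒᵖ M →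
    ∃ T : Submodule Rᵐᵒᵖ R, Nonempty (M ≃ₗ[Rᵐᵒᵖ] ↥T)

lemma kaschAnn {R : Type u} [Ring R] (hK : RightKasch R) (K : Set R)
    (hKr : IsRightIdeal K) (hKu : K ≠ Set.univ) : ∃ t : R, t ≠ 0 ∧ t ∈ lAnn K := by
  -- 1 ∉ K
  have h1 : (1 : R) ∉ K := by
    intro h1
    apply hKu
    ext x
    simpa using (by simpa using hKr.2.2 1 h1 x : x ∈ K)
  -- submodule
  let p : Submodule Rᵐᵒᵖ R :=
    { carrier := K
      zero_mem' := hKr.1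
      add_mem' := fun ha hb => hKr.2.1 _ _ ha hb
      smul_mem' := fun c a ha => by
        simpa [MulOpposite.smul_eq_mul_unop] using hKr.2.2 a ha c.unop }
  have hp : p ≠ ⊤ := fun h => h1 (by rw [show K = (p : Set R) from rfl, h]; trivial)
  -- maximal submodule above p
  let e : R ≃ₗ[Rᵐᵒᵖ] Rᵐᵒᵖ :=
    { MulOpposite.opAddEquiv with map_smul' := fun c x => rfl }
  let f := Submodule.orderIsoMapComap e
  have hfp : f p ≠ ⊤ := by
    intro h
    apply hp
    have := congrArg f.symm h
    simpa using this
  obtain ⟨m', hm', hle⟩ := Ideal.exists_le_maximal (f p) hfp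
  set m : Submodule Rᵐᵒᵖ R := f.symm m' with hm
  have hco : IsCoatom m := by
    rw [hm]
    exact (OrderIso.isCoatom_iff f.symm m').mpr (Ideal.isMaximal_def.mp hm')
  have hpm : p ≤ m := by
    have := f.symm.monotone hle
    simpa [hm] using this
  haveI : IsSimpleModule Rᵐᵒᵖ (R ⧸ m) := isSimpleModule_iff_isCoatom.mpr hco
  obtain ⟨T, ⟨g⟩⟩ := hK (R ⧸ m) inferInstance
  set t : R := (g (Submodule.Quotient.mk 1) : R) with ht
  have h1m : (1 : R) ∉ m := by
    intro h
    apply hco.1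
    rw [eq_top_iff]
    intro x _
    simpa [MulOpposite.smul_eq_mul_unop] using m.smul_mem (MulOpposite.op x) h
  refine ⟨t, ?_, ?_⟩
  · intro h0
    have hgz : g (Submodule.Quotient.mk 1) = 0 := by
      ext; exact h0
    have h2 : (Submodule.Quotient.mk 1 : R ⧸ m) = 0 := g.injective (by rw [hgz, map_zero])
    rw [Submodule.Quotient.mk_eq_zero] at h2
    exact h1m h2
  · intro k hk
    have hkm : k ∈ m := hpm hk
    have hq : (MulOpposite.op k) • (Submodule.Quotient.mk 1 : R ⧸ m) = 0 := by
      rw [← Submodule.Quotient.mk_smul, Submodule.Quotient.mk_eq_zero]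
      simpa [MulOpposite.smul_eq_mul_unop] using hkm
    have : (MulOpposite.op k) • g (Submodule.Quotient.mk 1) = 0 := by
      rw [← map_smul, hq, map_zero]
    have := congrArg (Subtype.val) this
    simpa [MulOpposite.smul_eq_mul_unop] using this

/-- Let `R` be a right Kasch ring and `J` a superfluous right ideal with
`rl(J) = J`. Then `l(J)` meets every nonzero left ideal `X` with `lr(X) = X`
nontrivially. -/
theorem stmt13 {R : Type u} [Ring R] (hK : RightKasch R)
    (J : Set R) (hJ : IsRightIdeal J)
    (hsup : ∀ K : Set R, IsRightIdeal K → J + K = Set.univ → K = Set.univ)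
    (hD : rAnn (lAnn J) = J) :
    ∀ X : Set R, IsLeftIdeal X → lAnn (rAnn X) = X → X ≠ {0} →
      lAnn J ∩ X ≠ {0} := by
  intro X hX hXD hX0 h
  have h0X : (0 : R) ∈ X := hX.1
  have h0rX : (0 : R) ∈ rAnn X := fun x _ => mul_zero x
  have hrX : IsRightIdeal (rAnn X) := by
    refine ⟨h0rX, fun a b ha hb x hx => ?_, fun a ha r x hx => ?_⟩
    · rw [mul_add, ha x hx, hb x hx, add_zero]
    · rw [← mul_assoc, ha x hx, zero_mul]
  have hsumI : IsRightIdeal (J + rAnn X) := by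
    refine ⟨?_, ?_, ?_⟩
    · exact ⟨0, hJ.1, 0, h0rX, by simp⟩
    · rintro _ _ ⟨a1, ha1, b1, hb1, rfl⟩ ⟨a2, ha2, b2, hb2, rfl⟩
      exact ⟨a1 + a2, hJ.2.1 _ _ ha1 ha2, b1 + b2, hrX.2.1 _ _ hb1 hb2, by show a1 + a2 + (b1 + b2) = a1 + b1 + (a2 + b2); abel⟩
    · rintro _ ⟨a, ha, b, hb, rfl⟩ r
      exact ⟨a * r, hJ.2.2 a ha r, b * r, hrX.2.2 b hb r, (add_mul a b r).symm⟩
  have hann : lAnn (J + rAnn X) = {0} := by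
    ext a
    constructor
    · intro ha
      rw [← h]
      constructor
      · intro j hj
        have := ha (j + 0) ⟨j, hj, 0, h0rX, rfl⟩
        simpa using this
      · rw [← hXD]
        intro u hu
        have := ha (0 + u) ⟨0, hJ.1, u, hu, rfl⟩
        simpa using this
    · intro ha
      rw [Set.mem_singleton_iff] at ha
      subst ha
      exact fun x _ => zero_mul x
  have hsum : J + rAnn X = Set.univ := by
    by_contra hne
    obtain ⟨t, ht0, ht⟩ := kaschAnn hK (J + rAnn X) hsumI hne
    rw [hann, Set.mem_singleton_iff] at ht
    exact ht0 ht
  have hrXu : rAnn X = Set.univ := hsup (rAnn X) hrX hsum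
  apply hX0
  rw [← hXD, hrXu]
  ext a
  simp only [Set.mem_singleton_iff]
  constructor
  · intro ha
    simpa using ha 1 (Set.mem_univ 1)
  · rintro rfl
    exact fun x _ => zero_mul x
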